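/- Let Ω be a set, h : Ω × ℝ^m → ℝ, and suppose that for each x ∈ Ω the map θ ↦ h(x, θ) is differentiable. Fix θ₀ ∈ ℝ^m and define the antisymmetrically initialized network H : Ω × (ℝ^m × ℝ^m) → ℝ by H(x, (θ₁, θ₂)) = (√2/2) h(x, θ₁) − (√2/2) h(x, θ₂). Then: (a) H(x, (θ₀, θ₀)) = 0 for all x ∈ Ω; and (b) for all x, x' ∈ Ω, the inner product of the gradients of H with respect to the full parameter vector Θ = (θ₁, θ₂) ∈ ℝ^{2m} at Θ₀ = (θ₀, θ₀) satisfies ⟨∇_Θ H(x, Θ₀), ∇_Θ H(x', Θ₀)⟩ = ⟨∇_θ h(x, θ₀), ∇_θ h(x', θ₀)⟩; that is, the neural tangent kernel of H at Θ₀ equals the neural tangent kernel of h at θ₀. -/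

import Mathlib

/-- AntiSymmetrical Initialization (ASI) trick: the doubled network
`H(x, (θ₁, θ₂)) = (√2/2) h(x, θ₁) - (√2/2) h(x, θ₂)` has zero output at the
initialization `Θ₀ = (θ₀, θ₀)`, and its neural tangent kernel at `Θ₀` (the inner
product over all `2m` parameter directions) equals the neural tangent kernel of `h` at
`θ₀`. -/
theorem stmt12 {Ω : Type*} {m : ℕ} (h : Ω → (Fin m → ℝ) → ℝ)
    (hdiff : ∀ x : Ω, Differentiable ℝ (h x)) (θ₀ : Fin m → ℝ)
    (H : Ω → (Fin m → ℝ) × (Fin m → ℝ) → ℝ)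
    (hH : ∀ (x : Ω) (Θ : (Fin m → ℝ) × (Fin m → ℝ)),
      H x Θ = Real.sqrt 2 / 2 * h x Θ.1 - Real.sqrt 2 / 2 * h x Θ.2) :
    (∀ x : Ω, H x (θ₀, θ₀) = 0) ∧
    ∀ x x' : Ω,
      ((∑ j, fderiv ℝ (H x) (θ₀, θ₀) (Pi.single j 1, 0) *
            fderiv ℝ (H x') (θ₀, θ₀) (Pi.single j 1, 0))
        + ∑ j, fderiv ℝ (H x) (θ₀, θ₀) (0, Pi.single j 1) *
            fderiv ℝ (H x') (θ₀, θ₀) (0, Pi.single j 1))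
      = ∑ j, fderiv ℝ (h x) θ₀ (Pi.single j 1) *
          fderiv ℝ (h x') θ₀ (Pi.single j 1) := by
  set c : ℝ := Real.sqrt 2 / 2 with hc
  have key : ∀ (x : Ω) (v w : Fin m → ℝ),
      fderiv ℝ (H x) (θ₀, θ₀) (v, w)
        = c * fderiv ℝ (h x) θ₀ v - c * fderiv ℝ (h x) θ₀ w := by
    intro x v w
    have hfun : H x = fun Θ : (Fin m → ℝ) × (Fin m → ℝ) =>
        c * h x Θ.1 - c * h x Θ.2 := funext (hH x)
    have D := fderiv ℝ (h x) θ₀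
    have h1 : HasFDerivAt (fun Θ : (Fin m → ℝ) × (Fin m → ℝ) => h x Θ.1)
        ((fderiv ℝ (h x) θ₀).comp (ContinuousLinearMap.fst ℝ _ _)) (θ₀, θ₀) :=
      ((hdiff x θ₀).hasFDerivAt).comp _ hasFDerivAt_fst
    have h2 : HasFDerivAt (fun Θ : (Fin m → ℝ) × (Fin m → ℝ) => h x Θ.2)
        ((fderiv ℝ (h x) θ₀).comp (ContinuousLinearMap.snd ℝ _ _)) (θ₀, θ₀) :=
      ((hdiff x θ₀).hasFDerivAt).comp _ hasFDerivAt_snd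
    have hH' : HasFDerivAt (H x)
        (c • ((fderiv ℝ (h x) θ₀).comp (ContinuousLinearMap.fst ℝ _ _))
          - c • ((fderiv ℝ (h x) θ₀).comp (ContinuousLinearMap.snd ℝ _ _))) (θ₀, θ₀) := by
      rw [hfun]
      exact (h1.const_mul c).sub (h2.const_mul c)
    rw [hH'.fderiv]
    simp [smul_eq_mul]
  constructor
  · intro x; rw [hH]; ring
  · intro x x'
    have hc2 : c * c = 1 / 2 := by
      rw [hc, div_mul_div_comm, Real.mul_self_sqrt (by norm_num)]; norm_num
    simp only [key]
    have : ∀ j : Fin m, fderiv ℝ (h x) θ₀ ((0 : Fin m → ℝ)) = 0 := fun _ => map_zero _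
    simp only [map_zero, mul_zero, sub_zero, zero_sub, mul_zero, neg_mul_neg, mul_neg, neg_neg]
    rw [← Finset.sum_add_distrib]
    apply Finset.sum_congr rfl
    intro j _
    ring_nf
    rw [sq, hc2]
    ring
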